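/- Let q(z), r(z) be complex rational functions such that the operator T[y] = y'' + q(z)·y' + r(z)·y is primitive and solvable by polynomials, let V be the ℂ-span of all polynomial eigenfunctions of T, and let ζ ∈ ℂ be a pole of q or of r. Then there is an integer ν ≥ 1 such that: (i) { ord_ζ(p) : p ∈ V, p ≠ 0 } = ℕ \ {1, 3, 5, …, 2ν−1}; (ii) the rational function (z−ζ)·q(z) has no pole at ζ and its value at ζ equals −2ν; (iii) the rational function (z−ζ)·r(z) has no pole at ζ. In particular every pole of T is a regular singular point. -/

import Mathlib

open Polynomial MeasureTheory

/-- The physicists' Hermite polynomials: `H 0 = 1`, `H (n+1) = 2X * H n - (H n)'`. -/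
noncomputable def pHermite (R : Type*) [CommRing R] : ℕ → Polynomial R
  | 0 => 1
  | n + 1 => 2 * X * pHermite R n - derivative (pHermite R n)

/-- The Wronskian determinant of a finite family of polynomials. -/
noncomputable def polyWronskian {R : Type*} [CommRing R] {n : ℕ}
    (f : Fin n → Polynomial R) : Polynomial R :=
  (Matrix.of fun i j : Fin n => (⇑(derivative (R := R)))^[(i : ℕ)] (f j)).det


/-- The action of the operator `T[y] = p·y'' + q·y' + r·y` on a polynomial,
viewed inside the field of rational functions. -/
noncomputable def ratApply (p q r : RatFunc ℂ) (y : Polynomial ℂ) : RatFunc ℂ :=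
  p * algebraMap (Polynomial ℂ) (RatFunc ℂ) (derivative (derivative y))
    + q * algebraMap (Polynomial ℂ) (RatFunc ℂ) (derivative y)
    + r * algebraMap (Polynomial ℂ) (RatFunc ℂ) y

/-- A polynomial eigenfunction of `T[y] = p·y'' + q·y' + r·y`. -/
def IsPolyEigenfunction (p q r : RatFunc ℂ) (y : Polynomial ℂ) : Prop :=
  y ≠ 0 ∧ ∃ lam : ℂ, ratApply p q r y = RatFunc.C lam * algebraMap (Polynomial ℂ) (RatFunc ℂ) y

/-- `T` is solvable by polynomials: for all but finitely many `n` there is a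
polynomial eigenfunction of degree `n`. -/
def SolvableByPolynomials (p q r : RatFunc ℂ) : Prop :=
  ∃ F : Finset ℕ, ∀ n : ℕ, n ∉ F →
    ∃ y : Polynomial ℂ, y.natDegree = n ∧ IsPolyEigenfunction p q r y

/-- `T` is primitive: no single point `ξ ∈ ℂ` is a root of every polynomial eigenfunction. -/
def Primitive (p q r : RatFunc ℂ) : Prop :=
  ¬ ∃ ξ : ℂ, ∀ y : Polynomial ℂ, IsPolyEigenfunction p q r y → y.eval ξ = 0

namespace Stmt6Aux

variable (ζ : ℂ)

/-- order of vanishing of a rational function at ζ (junk 0 at f = 0). -/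
noncomputable def rord (f : RatFunc ℂ) : ℤ :=
  (f.num.rootMultiplicity ζ : ℤ) - (f.denom.rootMultiplicity ζ : ℤ)

variable {ζ}

lemma rord_div {p s : Polynomial ℂ} (hp : p ≠ 0) (hs : s ≠ 0) :
    rord ζ (algebraMap (Polynomial ℂ) (RatFunc ℂ) p / algebraMap (Polynomial ℂ) (RatFunc ℂ) s)
      = (p.rootMultiplicity ζ : ℤ) - (s.rootMultiplicity ζ : ℤ) := by
  set f := algebraMap (Polynomial ℂ) (RatFunc ℂ) p / algebraMap (Polynomial ℂ) (RatFunc ℂ) s with hf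
  have hfne : f ≠ 0 := div_ne_zero (RatFunc.algebraMap_ne_zero hp) (RatFunc.algebraMap_ne_zero hs)
  have hnum : f.num ≠ 0 := RatFunc.num_ne_zero hfne
  have hden : f.denom ≠ 0 := f.denom_ne_zero
  have e1 : f * algebraMap (Polynomial ℂ) (RatFunc ℂ) s = algebraMap (Polynomial ℂ) (RatFunc ℂ) p :=
    div_mul_cancel₀ _ (RatFunc.algebraMap_ne_zero hs)
  have e2 : f * algebraMap (Polynomial ℂ) (RatFunc ℂ) f.denom
      = algebraMap (Polynomial ℂ) (RatFunc ℂ) f.num := by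
    nth_rewrite 1 [← RatFunc.num_div_denom f]
    exact div_mul_cancel₀ _ (RatFunc.algebraMap_ne_zero f.denom_ne_zero)
  have key : p * f.denom = f.num * s := by
    apply RatFunc.algebraMap_injective ℂ
    rw [map_mul, map_mul, ← e1, ← e2]
    ring
  have h2 : p.rootMultiplicity ζ + f.denom.rootMultiplicity ζ
      = f.num.rootMultiplicity ζ + s.rootMultiplicity ζ := by
    rw [← rootMultiplicity_mul (x := ζ) (mul_ne_zero hp hden), key,
      rootMultiplicity_mul (mul_ne_zero hnum hs)]
  rw [show rord ζ f = (f.num.rootMultiplicity ζ : ℤ) - (f.denom.rootMultiplicity ζ : ℤ) from rfl]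
  omega

lemma rord_algebraMap (p : Polynomial ℂ) (hp : p ≠ 0) :
    rord ζ (algebraMap (Polynomial ℂ) (RatFunc ℂ) p) = p.rootMultiplicity ζ := by
  have := rord_div (ζ := ζ) hp (one_ne_zero (α := Polynomial ℂ))
  simp only [map_one, div_one] at this
  rw [this]
  simp [rootMultiplicity_eq_zero (by simp : ¬ IsRoot 1 ζ)]

lemma rord_mul {f g : RatFunc ℂ} (hf : f ≠ 0) (hg : g ≠ 0) :
    rord ζ (f * g) = rord ζ f + rord ζ g := by
  have hfn : f.num ≠ 0 := RatFunc.num_ne_zero hf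
  have hgn : g.num ≠ 0 := RatFunc.num_ne_zero hg
  have h1 : f * g = algebraMap (Polynomial ℂ) (RatFunc ℂ) (f.num * g.num)
      / algebraMap (Polynomial ℂ) (RatFunc ℂ) (f.denom * g.denom) := by
    conv_lhs => rw [← RatFunc.num_div_denom f, ← RatFunc.num_div_denom g]
    rw [div_mul_div_comm, map_mul, map_mul]
  rw [h1, rord_div (mul_ne_zero hfn hgn) (mul_ne_zero f.denom_ne_zero g.denom_ne_zero),
    rootMultiplicity_mul (mul_ne_zero hfn hgn),
    rootMultiplicity_mul (mul_ne_zero f.denom_ne_zero g.denom_ne_zero), rord, rord]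
  push_cast
  ring

lemma rord_neg (f : RatFunc ℂ) : rord ζ (-f) = rord ζ f := by
  rcases eq_or_ne f 0 with rfl | hf
  · simp
  have hm1 : (-1 : RatFunc ℂ) = algebraMap (Polynomial ℂ) (RatFunc ℂ) (-1) := by simp
  have h : -f = (-1) * f := by ring
  rw [h, rord_mul (by norm_num) hf, hm1, rord_algebraMap (-1) (by norm_num)]
  simp [rootMultiplicity_eq_zero (show ¬ IsRoot (-1 : Polynomial ℂ) ζ by simp [IsRoot])]

lemma rord_add {f g : RatFunc ℂ} (hf : f ≠ 0) (hg : g ≠ 0) (hfg : f + g ≠ 0) :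
    min (rord ζ f) (rord ζ g) ≤ rord ζ (f + g) := by
  have hfn : f.num ≠ 0 := RatFunc.num_ne_zero hf
  have hgn : g.num ≠ 0 := RatFunc.num_ne_zero hg
  have h1 : f + g = algebraMap (Polynomial ℂ) (RatFunc ℂ) (f.num * g.denom + f.denom * g.num)
      / algebraMap (Polynomial ℂ) (RatFunc ℂ) (f.denom * g.denom) := by
    conv_lhs => rw [← RatFunc.num_div_denom f, ← RatFunc.num_div_denom g]
    rw [div_add_div _ _ (RatFunc.algebraMap_ne_zero f.denom_ne_zero)
      (RatFunc.algebraMap_ne_zero g.denom_ne_zero), map_add, map_mul, map_mul, map_mul]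
  have hNs : f.num * g.denom + f.denom * g.num ≠ 0 := by
    intro h0
    rw [h0, map_zero, zero_div] at h1
    exact hfg h1
  have hmin : min ((f.num * g.denom).rootMultiplicity ζ) ((f.denom * g.num).rootMultiplicity ζ)
      ≤ (f.num * g.denom + f.denom * g.num).rootMultiplicity ζ := rootMultiplicity_add ζ hNs
  rw [rootMultiplicity_mul (mul_ne_zero hfn g.denom_ne_zero),
    rootMultiplicity_mul (mul_ne_zero f.denom_ne_zero hgn)] at hmin
  rw [h1, rord_div hNs (mul_ne_zero f.denom_ne_zero g.denom_ne_zero),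
    rootMultiplicity_mul (mul_ne_zero f.denom_ne_zero g.denom_ne_zero), rord, rord]
  omega

/-- ultrametric exactness -/
lemma rord_add_eq_left {f g : RatFunc ℂ} (hf : f ≠ 0)
    (h : g = 0 ∨ (g ≠ 0 ∧ rord ζ f < rord ζ g)) : f + g ≠ 0 ∧ rord ζ (f + g) = rord ζ f := by
  rcases h with rfl | ⟨hg, hlt⟩
  · simpa using hf
  have hfg : f + g ≠ 0 := by
    intro h0
    have : f = -g := by linear_combination h0
    rw [this, rord_neg] at hlt
    exact lt_irrefl _ hlt
  refine ⟨hfg, le_antisymm ?_ ?_⟩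
  · by_contra hgt
    push_neg at hgt
    have h2 : min (rord ζ (f+g)) (rord ζ (-g)) ≤ rord ζ (f + g + -g) := by
      apply rord_add hfg (neg_ne_zero.mpr hg)
      simpa using hf
    rw [rord_neg] at h2
    simp only [add_neg_cancel_right] at h2
    omega
  · calc rord ζ f = min (rord ζ f) (rord ζ g) := by omega
    _ ≤ _ := rord_add hf hg hfg

lemma not_both_roots (f : RatFunc ℂ) : ¬(f.num.eval ζ = 0 ∧ f.denom.eval ζ = 0) := by
  rintro ⟨h1, h2⟩
  obtain ⟨a, b, hab⟩ := f.isCoprime_num_denom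
  have := congrArg (Polynomial.eval ζ) hab
  simp [h1, h2] at this

lemma denom_eval_ne_zero_of_rord {f : RatFunc ℂ} (h : 0 ≤ rord ζ f) : f.denom.eval ζ ≠ 0 := by
  rcases eq_or_ne f 0 with rfl | hf
  · simp
  intro hden
  have hd : 0 < f.denom.rootMultiplicity ζ := (rootMultiplicity_pos f.denom_ne_zero).mpr hden
  have hn : 0 < f.num.rootMultiplicity ζ := by
    rw [rord] at h; omega
  exact not_both_roots f ⟨(rootMultiplicity_pos (RatFunc.num_ne_zero hf)).mp hn, hden⟩

lemma rm_denom_eq_zero {f : RatFunc ℂ} (h : 0 ≤ rord ζ f) : f.denom.rootMultiplicity ζ = 0 :=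
  rootMultiplicity_eq_zero (denom_eval_ne_zero_of_rord h)

/-! ### OrdGE -/

def OrdGE (ζ : ℂ) (k : ℤ) (f : RatFunc ℂ) : Prop := f = 0 ∨ k ≤ rord ζ f

lemma OrdGE.mono {k k' : ℤ} {f : RatFunc ℂ} (h : k' ≤ k) (hf : OrdGE ζ k f) : OrdGE ζ k' f := by
  rcases hf with rfl | hf
  · exact Or.inl rfl
  · exact Or.inr (le_trans h hf)

lemma OrdGE.add {k : ℤ} {f g : RatFunc ℂ} (hf : OrdGE ζ k f) (hg : OrdGE ζ k g) :
    OrdGE ζ k (f + g) := by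
  rcases hf with rfl | hf
  · simpa using hg
  rcases hg with rfl | hg
  · rw [add_zero]; exact Or.inr hf
  rcases eq_or_ne f 0 with rfl | hf0
  · rw [zero_add]; exact Or.inr hg
  rcases eq_or_ne g 0 with rfl | hg0
  · rw [add_zero]; exact Or.inr hf
  rcases eq_or_ne (f + g) 0 with h0 | h0
  · exact Or.inl h0
  · exact Or.inr (le_trans (le_min hf hg) (rord_add hf0 hg0 h0))

lemma OrdGE.mul {a b : ℤ} {f g : RatFunc ℂ} (hf : OrdGE ζ a f) (hg : OrdGE ζ b g) :
    OrdGE ζ (a + b) (f * g) := by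
  rcases hf with rfl | hf
  · simp [OrdGE]
  rcases hg with rfl | hg
  · simp [OrdGE]
  rcases eq_or_ne f 0 with rfl | hf0
  · simp [OrdGE]
  rcases eq_or_ne g 0 with rfl | hg0
  · simp [OrdGE]
  exact Or.inr (by rw [rord_mul hf0 hg0]; exact add_le_add hf hg)

lemma ordGE_algebraMap (w : Polynomial ℂ) :
    OrdGE ζ (w.rootMultiplicity ζ : ℤ) (algebraMap (Polynomial ℂ) (RatFunc ℂ) w) := by
  rcases eq_or_ne w 0 with rfl | hw
  · simp [OrdGE]
  · exact Or.inr (le_of_eq (rord_algebraMap w hw).symm)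

lemma ordGE_algebraMap' (w : Polynomial ℂ) :
    OrdGE ζ 0 (algebraMap (Polynomial ℂ) (RatFunc ℂ) w) :=
  (ordGE_algebraMap w).mono (by positivity)

/-- adding something of strictly bigger order doesn't change the order -/
lemma rord_add_eq {f g : RatFunc ℂ} {c : ℤ} (hf : f ≠ 0) (hc : rord ζ f = c)
    (hg : OrdGE ζ (c + 1) g) : f + g ≠ 0 ∧ rord ζ (f + g) = c := by
  subst hc
  rcases hg with rfl | hg
  · simpa using hf
  rcases eq_or_ne g 0 with rfl | hg0
  · simpa using hf
  exact rord_add_eq_left hf (Or.inr ⟨hg0, by omega⟩)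

/-! ### evaluation -/

lemma eval₂_id_eq (p : Polynomial ℂ) : Polynomial.eval₂ (RingHom.id ℂ) ζ p = p.eval ζ := rfl

lemma rval_algebraMap (w : Polynomial ℂ) :
    RatFunc.eval (RingHom.id ℂ) ζ (algebraMap (Polynomial ℂ) (RatFunc ℂ) w) = w.eval ζ := by
  rw [RatFunc.eval_algebraMap]
  simp [eval₂_id_eq]

lemma rval_eq (f : RatFunc ℂ) :
    RatFunc.eval (RingHom.id ℂ) ζ f = f.num.eval ζ / f.denom.eval ζ := rfl

lemma rval_ne_zero_iff {f : RatFunc ℂ} (hf : f ≠ 0) (h0 : 0 ≤ rord ζ f) :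
    RatFunc.eval (RingHom.id ℂ) ζ f ≠ 0 ↔ rord ζ f = 0 := by
  have hden := denom_eval_ne_zero_of_rord h0
  have hdm := rm_denom_eq_zero h0
  rw [rval_eq, div_ne_zero_iff]
  constructor
  · rintro ⟨hnum, -⟩
    have : f.num.rootMultiplicity ζ = 0 := rootMultiplicity_eq_zero (by simpa [IsRoot] using hnum)
    rw [rord, this, hdm]; simp
  · intro h
    refine ⟨?_, hden⟩
    rw [rord, hdm] at h
    intro hev
    have : 0 < f.num.rootMultiplicity ζ :=
      (rootMultiplicity_pos (RatFunc.num_ne_zero hf)).mpr hev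
    omega

lemma eval_add' {f g : RatFunc ℂ} (h1 : 0 ≤ rord ζ f) (h2 : 0 ≤ rord ζ g) :
    RatFunc.eval (RingHom.id ℂ) ζ (f + g)
      = RatFunc.eval (RingHom.id ℂ) ζ f + RatFunc.eval (RingHom.id ℂ) ζ g := by
  apply RatFunc.eval_add
  · rw [eval₂_id_eq]; exact denom_eval_ne_zero_of_rord h1
  · rw [eval₂_id_eq]; exact denom_eval_ne_zero_of_rord h2

lemma eval_mul' {f g : RatFunc ℂ} (h1 : 0 ≤ rord ζ f) (h2 : 0 ≤ rord ζ g) :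
    RatFunc.eval (RingHom.id ℂ) ζ (f * g)
      = RatFunc.eval (RingHom.id ℂ) ζ f * RatFunc.eval (RingHom.id ℂ) ζ g := by
  apply RatFunc.eval_mul
  · rw [eval₂_id_eq]; exact denom_eval_ne_zero_of_rord h1
  · rw [eval₂_id_eq]; exact denom_eval_ne_zero_of_rord h2

/-! ### polynomial factorization at ζ -/

lemma exists_factor {w : Polynomial ℂ} (hw : w ≠ 0) :
    ∃ v : Polynomial ℂ, w = (X - C ζ) ^ (w.rootMultiplicity ζ) * v ∧ v.eval ζ ≠ 0 := by
  obtain ⟨v, hv, hndvd⟩ := w.exists_eq_pow_rootMultiplicity_mul_and_not_dvd hw ζ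
  exact ⟨v, hv, fun h => hndvd (dvd_iff_isRoot.mpr h)⟩

lemma rm_pow_mul (k : ℕ) {v : Polynomial ℂ} (hv : v.eval ζ ≠ 0) :
    rootMultiplicity ζ ((X - C ζ) ^ k * v) = k := by
  have hvne : v ≠ 0 := fun h => hv (by simp [h])
  rw [rootMultiplicity_mul (mul_ne_zero (pow_ne_zero _ (X_sub_C_ne_zero ζ)) hvne),
    rootMultiplicity_X_sub_C_pow, rootMultiplicity_eq_zero (by simpa [IsRoot] using hv)]
  omega

lemma deriv_pow_mul (k : ℕ) (v : Polynomial ℂ) :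
    derivative ((X - C ζ) ^ (k+1) * v)
      = (X - C ζ) ^ k * (C ((k:ℂ)+1) * v + (X - C ζ) * derivative v) := by
  rw [derivative_mul, derivative_pow, derivative_X_sub_C]
  simp only [Nat.add_sub_cancel]
  push_cast
  ring


lemma rm_le_natDegree {p : Polynomial ℂ} (hp : p ≠ 0) :
    p.rootMultiplicity ζ ≤ p.natDegree := by
  have h := Polynomial.natDegree_le_of_dvd (p.pow_rootMultiplicity_dvd ζ) hp
  rwa [natDegree_pow, natDegree_X_sub_C, mul_one] at h

lemma taylor_coeff_rm {p : Polynomial ℂ} (hp : p ≠ 0) :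
    (Polynomial.taylor ζ p).coeff (p.rootMultiplicity ζ) ≠ 0 := by
  set m := p.rootMultiplicity ζ with hm
  obtain ⟨v, hv, hvz⟩ := exists_factor hp
  rw [← hm] at hv
  have : Polynomial.taylor ζ p = X ^ m * Polynomial.taylor ζ v := by
    rw [taylor_apply, taylor_apply, hv, mul_comp, pow_comp, sub_comp, X_comp, C_comp]
    ring
  rw [this]
  have h2 : (X ^ m * Polynomial.taylor ζ v).coeff (0 + m)
      = (Polynomial.taylor ζ v).coeff 0 := coeff_X_pow_mul _ _ _
  rw [zero_add] at h2
  rw [h2, taylor_coeff_zero]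
  exact hvz

lemma combo_ne_zero {S : Finset ℕ} {y : ℕ → Polynomial ℂ}
    (hy : ∀ n ∈ S, (y n).natDegree = n ∧ y n ≠ 0)
    {c : ℕ → ℂ} {n₀ : ℕ} (hn₀ : n₀ ∈ S) (hc0 : c n₀ ≠ 0) :
    ∑ n ∈ S, c n • y n ≠ 0 := by
  classical
  set T := S.filter (fun n => c n ≠ 0) with hT
  have hTne : T.Nonempty := ⟨n₀, by simp [hT, hn₀, hc0]⟩
  set N := T.max' hTne with hN
  have hNT : N ∈ T := T.max'_mem hTne
  have hNS : N ∈ S := (Finset.mem_filter.mp hNT).1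
  have hcN : c N ≠ 0 := (Finset.mem_filter.mp hNT).2
  intro h0
  have hco := congrArg (fun p => Polynomial.coeff p N) h0
  simp only [finset_sum_coeff, coeff_smul, Polynomial.coeff_zero, smul_eq_mul] at hco
  rw [Finset.sum_eq_single N] at hco
  · have hyN := hy N hNS
    have hlc : (y N).coeff N ≠ 0 := by
      have he : (y N).leadingCoeff = (y N).coeff N := by rw [leadingCoeff, hyN.1]
      rw [← he]
      exact leadingCoeff_ne_zero.mpr hyN.2
    exact (mul_ne_zero hcN hlc) hco
  · intro b hb hbN
    rcases eq_or_ne (c b) 0 with hcb | hcb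
    · rw [hcb, zero_mul]
    · have hbT : b ∈ T := Finset.mem_filter.mpr ⟨hb, hcb⟩
      have hble : b ≤ N := Finset.le_max' T b hbT
      have hblt : b < N := lt_of_le_of_ne hble hbN
      rw [coeff_eq_zero_of_natDegree_lt (by rw [(hy b hb).1]; exact hblt), mul_zero]
  · intro h; exact absurd hNS h

lemma count_lemma {V : Submodule ℂ (Polynomial ℂ)} {F : Finset ℕ} {y : ℕ → Polynomial ℂ}
    (hy : ∀ n, n ∉ F → (y n).natDegree = n ∧ y n ≠ 0 ∧ y n ∈ V) (ζ : ℂ) :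
    {m : ℕ | ¬ ∃ p, p ∈ V ∧ p ≠ 0 ∧ p.rootMultiplicity ζ = m}.Finite := by
  classical
  set Mset : Set ℕ := {m : ℕ | ∃ p, p ∈ V ∧ p ≠ 0 ∧ p.rootMultiplicity ζ = m} with hMset
  -- key cardinality bound in each window
  have key : ∀ D : ℕ, ((Finset.range (D+1)).filter (fun m => m ∈ Mset)).card
      ≥ D + 1 - F.card := by
    intro D
    set S : Finset ℕ := Finset.range (D+1) \ F with hS
    set M' : Finset ℕ := (Finset.range (D+1)).filter (fun m => m ∈ Mset) with hM'
    have hcard : S.card ≤ M'.card := by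
      by_contra hlt
      push_neg at hlt
      -- build the linear map of Taylor coefficients
      let L : ((↥S) → ℂ) →ₗ[ℂ] ((↥M') → ℂ) :=
        { toFun := fun c m => ∑ n ∈ S.attach, c n * ((Polynomial.taylor ζ) (y ↑n)).coeff ↑m
          map_add' := by
            intro c₁ c₂
            funext m
            simp [add_mul, Finset.sum_add_distrib]
          map_smul' := by
            intro t c
            funext m
            simp [Finset.mul_sum, mul_assoc]
        }
      have hLval : ∀ (c : (↥S) → ℂ) (m : ↥M'),
          L c m = (Polynomial.taylor ζ (∑ n ∈ S.attach, c n • y ↑n)).coeff ↑m := by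
        intro c m
        show _ = (Polynomial.taylor ζ (∑ n ∈ S.attach, c n • y ↑n)).coeff ↑m
        rw [map_sum, finset_sum_coeff]
        apply Finset.sum_congr rfl
        intro n _
        rw [_root_.map_smul, coeff_smul, smul_eq_mul]
      have hni : ¬ Function.Injective L := by
        intro hinj
        have hle := LinearMap.finrank_le_finrank_of_injective hinj
        rw [Module.finrank_fintype_fun_eq_card, Module.finrank_fintype_fun_eq_card] at hle
        simp only [Fintype.card_coe] at hle
        omega
      have hker : LinearMap.ker L ≠ ⊥ := fun h => hni (LinearMap.ker_eq_bot.mp h)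
      obtain ⟨c, hcker, hcne⟩ := Submodule.ne_bot_iff _ |>.mp hker
      obtain ⟨n₀, hn₀⟩ := Function.ne_iff.mp hcne
      set c' : ℕ → ℂ := fun n => if h : n ∈ S then c ⟨n, h⟩ else 0 with hc'
      set p : Polynomial ℂ := ∑ n ∈ S.attach, c n • y ↑n with hp
      have hps : p = ∑ n ∈ S, c' n • y n := by
        rw [hp, ← Finset.sum_attach S (fun n => c' n • y n)]
        apply Finset.sum_congr rfl
        intro x hx
        rw [hc']
        simp
      have hySS : ∀ n ∈ S, (y n).natDegree = n ∧ y n ≠ 0 := by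
        intro n hn
        rw [hS, Finset.mem_sdiff] at hn
        exact ⟨(hy n hn.2).1, (hy n hn.2).2.1⟩
      have hpne : p ≠ 0 := by
        rw [hps]
        refine combo_ne_zero hySS n₀.2 ?_
        rw [hc']
        simpa using hn₀
      have hpV : p ∈ V := by
        rw [hp]
        refine Submodule.sum_mem V ?_
        intro n _
        have hn2 : (n : ℕ) ∈ Finset.range (D+1) \ F := n.2
        rw [Finset.mem_sdiff] at hn2
        exact Submodule.smul_mem V _ (hy n hn2.2).2.2
      have hmle : p.rootMultiplicity ζ ≤ D := by
        refine le_trans (rm_le_natDegree hpne) ?_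
        rw [hp]
        refine natDegree_sum_le_of_forall_le _ _ ?_
        intro n _
        refine le_trans (natDegree_smul_le _ _) ?_
        rw [(hySS n n.2).1]
        have hn2 : (n : ℕ) ∈ Finset.range (D+1) \ F := n.2
        rw [Finset.mem_sdiff, Finset.mem_range] at hn2
        omega
      have hmM : p.rootMultiplicity ζ ∈ M' := by
        rw [hM', Finset.mem_filter, Finset.mem_range]
        exact ⟨by omega, ⟨p, hpV, hpne, rfl⟩⟩
      have hzero : (Polynomial.taylor ζ p).coeff (p.rootMultiplicity ζ) = 0 := by
        have h := congrFun (LinearMap.mem_ker.mp hcker) ⟨p.rootMultiplicity ζ, hmM⟩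
        rw [hLval] at h
        exact h.symm ▸ rfl
      exact taylor_coeff_rm hpne hzero
    have hScard : D + 1 - F.card ≤ S.card := by
      have h := Finset.le_card_sdiff F (Finset.range (D+1))
      rw [Finset.card_range] at h
      exact h
    omega
  -- now conclude finiteness
  by_contra hinf
  have hinf' : Set.Infinite {m : ℕ | ¬ ∃ p, p ∈ V ∧ p ≠ 0 ∧ p.rootMultiplicity ζ = m} := hinf
  obtain ⟨T, hTsub, hTfin, hTcard⟩ := hinf'.exists_subset_ncard_eq (F.card + 1)
  set Tf : Finset ℕ := hTfin.toFinset with hTf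
  have hTfcard : Tf.card = F.card + 1 := by
    rw [hTf, ← hTcard]
    exact (Set.ncard_eq_toFinset_card T hTfin).symm
  set D : ℕ := Tf.sup id with hD
  have hsub : Tf ⊆ (Finset.range (D+1)).filter (fun m => m ∉ Mset) := by
    intro m hm
    rw [Finset.mem_filter, Finset.mem_range]
    constructor
    · have : m ≤ D := Finset.le_sup (f := id) hm
      omega
    · have : m ∈ T := hTfin.mem_toFinset.mp hm
      exact hTsub this
  have h1 := Finset.card_le_card hsub
  have h2 := key D
  have h3 : ((Finset.range (D+1)).filter (fun m => m ∈ Mset)).card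
      + ((Finset.range (D+1)).filter (fun m => m ∉ Mset)).card = D + 1 := by
    have h := Finset.card_filter_add_card_filter_not
      (s := Finset.range (D+1)) (p := fun m => m ∈ Mset)
    rw [Finset.card_range] at h
    exact h
  have h4 : ((Finset.range (D+1)).filter (fun m => m ∈ Mset)).card ≤ D + 1 := by
    refine le_trans (Finset.card_filter_le _ _) (by rw [Finset.card_range])
  omega


/-! ### misc small helpers -/

lemma rord_zero : rord ζ (0 : RatFunc ℂ) = 0 := by
  simp [rord]

lemma OrdGE.neg {k : ℤ} {f : RatFunc ℂ} (hf : OrdGE ζ k f) : OrdGE ζ k (-f) := by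
  rcases hf with rfl | hf
  · simp [OrdGE]
  · exact Or.inr (by rw [rord_neg]; exact hf)

lemma rord_nonneg_of_ordGE {f : RatFunc ℂ} (hf : OrdGE ζ 0 f) : 0 ≤ rord ζ f := by
  rcases hf with rfl | hf
  · rw [rord_zero]
  · exact hf

/-! ### the operator preserves the span of eigenfunctions -/

lemma T_closure (q r : RatFunc ℂ) {w : Polynomial ℂ}
    (hw : w ∈ Submodule.span ℂ {y : Polynomial ℂ | IsPolyEigenfunction 1 q r y}) :
    ∃ P, P ∈ Submodule.span ℂ {y : Polynomial ℂ | IsPolyEigenfunction 1 q r y} ∧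
      algebraMap (Polynomial ℂ) (RatFunc ℂ) (derivative (derivative w))
        + q * algebraMap (Polynomial ℂ) (RatFunc ℂ) (derivative w)
        + r * algebraMap (Polynomial ℂ) (RatFunc ℂ) w
      = algebraMap (Polynomial ℂ) (RatFunc ℂ) P := by
  induction hw using Submodule.span_induction with
  | mem y hy =>
      have hymem := hy
      obtain ⟨hy0, lam, hlam⟩ := hymem
      refine ⟨lam • y, Submodule.smul_mem _ _ (Submodule.subset_span hy), ?_⟩
      rw [ratApply, one_mul] at hlam
      rw [Polynomial.smul_eq_C_mul, map_mul, RatFunc.algebraMap_C]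
      exact hlam
  | zero => exact ⟨0, Submodule.zero_mem _, by simp⟩
  | add x z hx hz ihx ihz =>
      obtain ⟨P1, hP1, he1⟩ := ihx
      obtain ⟨P2, hP2, he2⟩ := ihz
      refine ⟨P1 + P2, Submodule.add_mem _ hP1 hP2, ?_⟩
      simp only [derivative_add, map_add]
      linear_combination he1 + he2
  | smul a x hx ihx =>
      obtain ⟨P, hP, he⟩ := ihx
      refine ⟨a • P, Submodule.smul_mem _ _ hP, ?_⟩
      simp only [Polynomial.smul_eq_C_mul, derivative_C_mul, map_mul, RatFunc.algebraMap_C]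
      linear_combination RatFunc.C a * he

/-! ### local constraints at a pole -/

lemma shiftA {q r : RatFunc ℂ} {ζ : ℂ} (hq : q ≠ 0) (hdq : rord ζ q ≤ -2)
    (hr : OrdGE ζ (rord ζ q) r) {w Tw : Polynomial ℂ} (hw : w ≠ 0)
    (hm : 1 ≤ w.rootMultiplicity ζ)
    (heq : algebraMap (Polynomial ℂ) (RatFunc ℂ) (derivative (derivative w))
        + q * algebraMap (Polynomial ℂ) (RatFunc ℂ) (derivative w)
        + r * algebraMap (Polynomial ℂ) (RatFunc ℂ) w
      = algebraMap (Polynomial ℂ) (RatFunc ℂ) Tw) :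
    Tw ≠ 0 ∧ (Tw.rootMultiplicity ζ : ℤ) = (w.rootMultiplicity ζ : ℤ) - 1 + rord ζ q := by
  obtain ⟨k, hk⟩ : ∃ k, w.rootMultiplicity ζ = k + 1 :=
    ⟨w.rootMultiplicity ζ - 1, by omega⟩
  obtain ⟨v, hv, hvz⟩ := exists_factor hw
  rw [hk] at hv
  set B : Polynomial ℂ := Polynomial.C (((k:ℕ):ℂ)+1) * v + (X - Polynomial.C ζ) * derivative v
    with hB
  have hw' : derivative w = (X - Polynomial.C ζ)^k * B := by
    rw [hv]; exact deriv_pow_mul k v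
  have hBe : B.eval ζ = ((k:ℂ)+1) * v.eval ζ := by
    rw [hB]; simp
  have hBz : B.eval ζ ≠ 0 := by
    rw [hBe]
    exact mul_ne_zero (Nat.cast_add_one_ne_zero k) hvz
  have hrmw' : (derivative w).rootMultiplicity ζ = k := by
    rw [hw']; exact rm_pow_mul k hBz
  have hw'ne : derivative w ≠ 0 := by
    rw [hw']
    exact mul_ne_zero (pow_ne_zero _ (X_sub_C_ne_zero ζ)) (fun h => hBz (by rw [h]; simp))
  have hfne : q * algebraMap (Polynomial ℂ) (RatFunc ℂ) (derivative w) ≠ 0 :=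
    mul_ne_zero hq (RatFunc.algebraMap_ne_zero hw'ne)
  have hford : rord ζ (q * algebraMap (Polynomial ℂ) (RatFunc ℂ) (derivative w))
      = rord ζ q + k := by
    rw [rord_mul hq (RatFunc.algebraMap_ne_zero hw'ne), rord_algebraMap _ hw'ne, hrmw']
  have hgord : OrdGE ζ (rord ζ q + k + 1)
      (algebraMap (Polynomial ℂ) (RatFunc ℂ) (derivative (derivative w))
        + r * algebraMap (Polynomial ℂ) (RatFunc ℂ) w) := by
    apply OrdGE.add
    · rcases eq_or_ne (derivative (derivative w)) 0 with h0 | h0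
      · exact Or.inl (by rw [h0, map_zero])
      · have h1 : (derivative w).rootMultiplicity ζ - 1
            ≤ (derivative (derivative w)).rootMultiplicity ζ :=
          rootMultiplicity_sub_one_le_derivative_rootMultiplicity_of_ne_zero _ ζ h0
        refine Or.inr ?_
        rw [rord_algebraMap _ h0]
        rw [hrmw'] at h1
        omega
    · have := OrdGE.mul hr (ordGE_algebraMap (ζ := ζ) w)
      refine this.mono ?_
      rw [hk]
      push_cast
      omega
  have hTw := rord_add_eq hfne hford (by
    have : rord ζ q + k + 1 = (rord ζ q + k) + 1 := by ring
    rw [← this]; exact hgord)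
  rw [show q * algebraMap (Polynomial ℂ) (RatFunc ℂ) (derivative w)
      + (algebraMap (Polynomial ℂ) (RatFunc ℂ) (derivative (derivative w))
        + r * algebraMap (Polynomial ℂ) (RatFunc ℂ) w)
      = algebraMap (Polynomial ℂ) (RatFunc ℂ) Tw from by linear_combination heq] at hTw
  have hTwne : Tw ≠ 0 := by
    intro h0
    rw [h0, map_zero] at hTw
    exact hTw.1 rfl
  refine ⟨hTwne, ?_⟩
  have := hTw.2
  rw [rord_algebraMap _ hTwne] at this
  rw [this, hk]
  push_cast
  ring

lemma shiftB {q r : RatFunc ℂ} {ζ : ℂ} (hq : q ≠ 0) (hdq : rord ζ q = -1)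
    (hr : OrdGE ζ (-1) r) {w Tw : Polynomial ℂ} (hw : w ≠ 0)
    (hm : w.rootMultiplicity ζ = 1)
    (heq : algebraMap (Polynomial ℂ) (RatFunc ℂ) (derivative (derivative w))
        + q * algebraMap (Polynomial ℂ) (RatFunc ℂ) (derivative w)
        + r * algebraMap (Polynomial ℂ) (RatFunc ℂ) w
      = algebraMap (Polynomial ℂ) (RatFunc ℂ) Tw) : False := by
  obtain ⟨v, hv, hvz⟩ := exists_factor hw
  rw [hm, pow_one] at hv
  have hw' : derivative w = Polynomial.C 1 * v + (X - Polynomial.C ζ) * derivative v := by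
    have := deriv_pow_mul (ζ := ζ) 0 v
    rw [pow_one, pow_zero, one_mul] at this
    rw [hv, this]
    norm_num
  have hw'e : (derivative w).eval ζ = v.eval ζ := by rw [hw']; simp
  have hw'ne : derivative w ≠ 0 := fun h => hvz (by rw [← hw'e, h]; simp)
  have hrmw' : (derivative w).rootMultiplicity ζ = 0 :=
    rootMultiplicity_eq_zero (by rw [IsRoot, hw'e]; exact hvz)
  have hfne : q * algebraMap (Polynomial ℂ) (RatFunc ℂ) (derivative w) ≠ 0 :=
    mul_ne_zero hq (RatFunc.algebraMap_ne_zero hw'ne)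
  have hford : rord ζ (q * algebraMap (Polynomial ℂ) (RatFunc ℂ) (derivative w)) = -1 := by
    rw [rord_mul hq (RatFunc.algebraMap_ne_zero hw'ne), rord_algebraMap _ hw'ne, hrmw', hdq]
    ring
  have hgord : OrdGE ζ 0
      (algebraMap (Polynomial ℂ) (RatFunc ℂ) (derivative (derivative w))
        + r * algebraMap (Polynomial ℂ) (RatFunc ℂ) w
        + - algebraMap (Polynomial ℂ) (RatFunc ℂ) Tw) := by
    refine OrdGE.add (OrdGE.add (ordGE_algebraMap' _) ?_) ((ordGE_algebraMap' _).neg)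
    have := OrdGE.mul hr (ordGE_algebraMap (ζ := ζ) w)
    refine this.mono ?_
    rw [hm]
    norm_num
  have hsum := rord_add_eq hfne hford (hgord.mono (by omega))
  apply hsum.1
  linear_combination heq

lemma shiftC {q r : RatFunc ℂ} {ζ : ℂ} (hq : q ≠ 0) (hdq : rord ζ q = -1)
    (hr : OrdGE ζ (-1) r) {w Tw : Polynomial ℂ} (hw : w ≠ 0) {k : ℕ}
    (hm : w.rootMultiplicity ζ = k + 2)
    (hcoef : ((k:ℂ)+2) * (((k:ℂ)+1) + RatFunc.eval (RingHom.id ℂ) ζ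
      (algebraMap (Polynomial ℂ) (RatFunc ℂ) (X - Polynomial.C ζ) * q)) ≠ 0)
    (heq : algebraMap (Polynomial ℂ) (RatFunc ℂ) (derivative (derivative w))
        + q * algebraMap (Polynomial ℂ) (RatFunc ℂ) (derivative w)
        + r * algebraMap (Polynomial ℂ) (RatFunc ℂ) w
      = algebraMap (Polynomial ℂ) (RatFunc ℂ) Tw) :
    Tw ≠ 0 ∧ Tw.rootMultiplicity ζ = k := by
  set π : RatFunc ℂ := algebraMap (Polynomial ℂ) (RatFunc ℂ) (X - Polynomial.C ζ) with hπ
  set a : ℂ := RatFunc.eval (RingHom.id ℂ) ζ (π * q) with ha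
  have hπne : π ≠ 0 := RatFunc.algebraMap_ne_zero (X_sub_C_ne_zero ζ)
  have hπord : rord ζ π = 1 := by
    rw [hπ, rord_algebraMap _ (X_sub_C_ne_zero ζ), rootMultiplicity_X_sub_C_self]
    norm_num
  have hπq_ord : rord ζ (π * q) = 0 := by
    rw [rord_mul hπne hq, hπord, hdq]; ring
  obtain ⟨v, hv, hvz⟩ := exists_factor hw
  rw [hm] at hv
  set B : Polynomial ℂ := Polynomial.C (((k+1:ℕ):ℂ)+1) * v
      + (X - Polynomial.C ζ) * derivative v with hB
  have hw' : derivative w = (X - Polynomial.C ζ)^(k+1) * B := by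
    rw [hv]; exact deriv_pow_mul (k+1) v
  set A : Polynomial ℂ := Polynomial.C (((k:ℕ):ℂ)+1) * B
      + (X - Polynomial.C ζ) * derivative B with hA
  have hw'' : derivative (derivative w) = (X - Polynomial.C ζ)^k * A := by
    rw [hw']; exact deriv_pow_mul k B
  have hBe : B.eval ζ = ((k:ℂ)+2) * v.eval ζ := by
    simp only [hB, eval_add, eval_mul, eval_C, eval_sub, eval_X]
    push_cast
    ring
  have hAe : A.eval ζ = ((k:ℂ)+1) * (((k:ℂ)+2) * v.eval ζ) := by
    simp only [hA, eval_add, eval_mul, eval_C, eval_sub, eval_X, hBe]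
    push_cast
    ring
  set E : RatFunc ℂ := algebraMap (Polynomial ℂ) (RatFunc ℂ) A
      + (π * q) * algebraMap (Polynomial ℂ) (RatFunc ℂ) B with hE
  have h0A : 0 ≤ rord ζ (algebraMap (Polynomial ℂ) (RatFunc ℂ) A) :=
    rord_nonneg_of_ordGE (ordGE_algebraMap' A)
  have h0B : 0 ≤ rord ζ (algebraMap (Polynomial ℂ) (RatFunc ℂ) B) :=
    rord_nonneg_of_ordGE (ordGE_algebraMap' B)
  have h0πq : 0 ≤ rord ζ (π * q) := le_of_eq hπq_ord.symm
  have h0πqB : 0 ≤ rord ζ ((π * q) * algebraMap (Polynomial ℂ) (RatFunc ℂ) B) :=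
    rord_nonneg_of_ordGE (by
      have := OrdGE.mul (Or.inr h0πq : OrdGE ζ 0 (π * q)) (ordGE_algebraMap' (ζ := ζ) B)
      simpa using this)
  have hEval : RatFunc.eval (RingHom.id ℂ) ζ E = ((k:ℂ)+2) * (((k:ℂ)+1) + a) * v.eval ζ := by
    rw [hE, eval_add' h0A h0πqB, eval_mul' h0πq h0B, rval_algebraMap, rval_algebraMap,
      hAe, hBe]
    ring
  have hEvalne : RatFunc.eval (RingHom.id ℂ) ζ E ≠ 0 := by
    rw [hEval]
    exact mul_ne_zero hcoef hvz
  have hEne : E ≠ 0 := by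
    intro h0
    rw [h0] at hEvalne
    simp at hEvalne
  have h0E : 0 ≤ rord ζ E := by
    rw [hE]
    exact rord_nonneg_of_ordGE (OrdGE.add (ordGE_algebraMap' A)
      (by
        have := OrdGE.mul (Or.inr h0πq : OrdGE ζ 0 (π * q)) (ordGE_algebraMap' (ζ := ζ) B)
        simpa using this))
  have hEord : rord ζ E = 0 := (rval_ne_zero_iff hEne h0E).mp hEvalne
  have hG : algebraMap (Polynomial ℂ) (RatFunc ℂ) (derivative (derivative w))
      + q * algebraMap (Polynomial ℂ) (RatFunc ℂ) (derivative w)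
      = algebraMap (Polynomial ℂ) (RatFunc ℂ) ((X - Polynomial.C ζ)^k) * E := by
    rw [hw'', hw', map_mul, map_mul, hE, map_pow, map_pow, hπ]
    ring
  have hGne : algebraMap (Polynomial ℂ) (RatFunc ℂ) ((X - Polynomial.C ζ)^k) * E ≠ 0 :=
    mul_ne_zero (RatFunc.algebraMap_ne_zero (pow_ne_zero _ (X_sub_C_ne_zero ζ))) hEne
  have hGord : rord ζ (algebraMap (Polynomial ℂ) (RatFunc ℂ) ((X - Polynomial.C ζ)^k) * E)
      = k := by
    rw [rord_mul (RatFunc.algebraMap_ne_zero (pow_ne_zero _ (X_sub_C_ne_zero ζ))) hEne,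
      rord_algebraMap _ (pow_ne_zero _ (X_sub_C_ne_zero ζ)), rootMultiplicity_X_sub_C_pow,
      hEord]
    ring
  have hrw : OrdGE ζ ((k:ℤ) + 1) (r * algebraMap (Polynomial ℂ) (RatFunc ℂ) w) := by
    have := OrdGE.mul hr (ordGE_algebraMap (ζ := ζ) w)
    refine this.mono ?_
    rw [hm]
    push_cast
    omega
  have hTw := rord_add_eq hGne hGord hrw
  rw [show algebraMap (Polynomial ℂ) (RatFunc ℂ) ((X - Polynomial.C ζ)^k) * E
      + r * algebraMap (Polynomial ℂ) (RatFunc ℂ) w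
      = algebraMap (Polynomial ℂ) (RatFunc ℂ) Tw from by
    rw [← hG]; linear_combination heq] at hTw
  have hTwne : Tw ≠ 0 := by
    intro h0
    rw [h0, map_zero] at hTw
    exact hTw.1 rfl
  refine ⟨hTwne, ?_⟩
  have := hTw.2
  rw [rord_algebraMap _ hTwne] at this
  exact_mod_cast this

/-! ### endgame combinatorics -/

lemma endgame (M : Set ℕ) (h0 : 0 ∈ M) (h1 : 1 ∉ M) (hfin : {m : ℕ | m ∉ M}.Finite) (a : ℂ)
    (hdown : ∀ k : ℕ, (k+2) ∈ M → ((k:ℂ)+2) * (((k:ℂ)+1) + a) ≠ 0 → k ∈ M) :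
    ∃ ν : ℕ, 1 ≤ ν ∧ a = -(2*(ν:ℂ)) ∧ M = {m : ℕ | ¬(m % 2 = 1 ∧ m < 2*ν)} := by
  classical
  set Cf : Finset ℕ := hfin.toFinset with hCf
  have h1C : 1 ∈ Cf := hfin.mem_toFinset.mpr h1
  have hCne : Cf.Nonempty := ⟨1, h1C⟩
  set L : ℕ := Cf.max' hCne with hL
  have hLC : L ∉ M := hfin.mem_toFinset.mp (Cf.max'_mem hCne)
  have hmemM : ∀ m, L < m → m ∈ M := by
    intro m hm
    by_contra hmM
    have h' : m ∈ Cf := hfin.mem_toFinset.mpr hmM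
    have := Finset.le_max' Cf m h'
    omega
  have ha : a = -((L:ℂ)+1) := by
    have hL2 : L + 2 ∈ M := hmemM _ (by omega)
    by_contra hne
    apply hLC
    apply hdown L hL2
    have h2 : ((L:ℂ)+2) ≠ 0 := by
      have := Nat.cast_add_one_ne_zero (R := ℂ) (L+1)
      push_cast at this
      intro h'
      apply this
      linear_combination h'
    apply mul_ne_zero h2
    intro h0'
    apply hne
    linear_combination h0'
  have hdown' : ∀ k : ℕ, k ≠ L → (k+2) ∈ M → k ∈ M := by
    intro k hk h2
    apply hdown k h2
    apply mul_ne_zero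
    · have := Nat.cast_add_one_ne_zero (R := ℂ) (k+1)
      push_cast at this
      intro h'
      apply this
      linear_combination h'
    · rw [ha]
      intro h0'
      apply hk
      have : (k:ℂ) = (L:ℂ) := by linear_combination h0'
      exact_mod_cast this
  have hclimb : ∀ d : ℕ, ∀ c, c ∉ M → L - c = d → ∃ j, c + 2*j = L := by
    intro d
    induction d using Nat.strong_induction_on with
    | _ d ih =>
      intro c hc hd
      rcases eq_or_ne c L with rfl | hne
      · exact ⟨0, by omega⟩
      · have hcL : c ≤ L := by
          by_contra h
          exact hc (hmemM c (by omega))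
        have hc2 : c + 2 ∉ M := fun h => hc (hdown' c hne h)
        have hc2L : c + 2 ≤ L := by
          by_contra h
          exact hc2 (hmemM _ (by omega))
        obtain ⟨j, hj⟩ := ih (L - (c+2)) (by omega) (c+2) hc2 rfl
        exact ⟨j+1, by omega⟩
  have hLodd : L % 2 = 1 := by
    obtain ⟨j, hj⟩ := hclimb (L - 1) 1 h1 rfl
    omega
  have hoddC : ∀ j : ℕ, 2*j+1 ≤ L → (2*j+1) ∉ M := by
    intro j
    induction j with
    | zero =>
      intro _
      simpa using h1
    | succ i ih =>
      intro hle hmem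
      have hne : 2*i+1 ≠ L := by omega
      have hmem' : (2*i+1) ∈ M := by
        apply hdown' _ hne
        have he : 2*(i+1)+1 = (2*i+1)+2 := by omega
        rwa [he] at hmem
      exact ih (by omega) hmem'
  have hC_char : ∀ m : ℕ, m ∉ M ↔ (m % 2 = 1 ∧ m ≤ L) := by
    intro m
    constructor
    · intro hm
      obtain ⟨j, hj⟩ := hclimb (L - m) m hm rfl
      omega
    · rintro ⟨hodd, hle⟩
      obtain ⟨j, hj⟩ : ∃ j, m = 2*j+1 := ⟨m/2, by omega⟩
      rw [hj]
      exact hoddC j (by omega)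
  refine ⟨(L+1)/2, by omega, ?_, ?_⟩
  · rw [ha]
    have hn : ((L:ℂ)+1) = 2*(((L+1)/2 : ℕ):ℂ) := by
      have hn' : L + 1 = 2 * ((L+1)/2) := by omega
      have : ((L+1 : ℕ):ℂ) = ((2 * ((L+1)/2) : ℕ):ℂ) := by rw [← hn']
      push_cast at this
      linear_combination this
    rw [hn]
  · ext m
    have h := hC_char m
    simp only [Set.mem_setOf_eq]
    constructor
    · intro hm hcon
      exact (h.mpr ⟨hcon.1, by omega⟩) hm
    · intro hnc
      by_contra hm
      obtain ⟨ho, hl⟩ := h.mp hm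
      exact hnc ⟨ho, by omega⟩

end Stmt6Aux

open Stmt6Aux in
theorem stmt6 (q r : RatFunc ℂ)
    (hprim : Primitive 1 q r) (hsolv : SolvableByPolynomials 1 q r)
    (ζ : ℂ) (hpole : q.denom.eval ζ = 0 ∨ r.denom.eval ζ = 0) :
    ∃ ν : ℕ, 1 ≤ ν ∧
      -- (i) the set of orders of vanishing at ζ of nonzero elements of the span of
      -- the polynomial eigenfunctions is ℕ minus the odd numbers below 2ν
      {m : ℕ | ∃ p ∈ Submodule.span ℂ {y : Polynomial ℂ | IsPolyEigenfunction 1 q r y},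
          p ≠ 0 ∧ p.rootMultiplicity ζ = m}
        = {m : ℕ | ¬(m % 2 = 1 ∧ m < 2 * ν)} ∧
      -- (ii) (z - ζ)·q has no pole at ζ and takes the value -2ν there
      ((algebraMap (Polynomial ℂ) (RatFunc ℂ) (X - C ζ) * q).denom.eval ζ ≠ 0 ∧
        RatFunc.eval (RingHom.id ℂ) ζ (algebraMap (Polynomial ℂ) (RatFunc ℂ) (X - C ζ) * q)
          = -(2 * (ν : ℂ))) ∧
      -- (iii) (z - ζ)·r has no pole at ζ
      (algebraMap (Polynomial ℂ) (RatFunc ℂ) (X - C ζ) * r).denom.eval ζ ≠ 0 := by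
  classical
  obtain ⟨F, hF⟩ := hsolv
  choose yF hyFdeg hyFeig using hF
  set y : ℕ → Polynomial ℂ := fun n => if h : n ∈ F then 0 else yF n h with hy_def
  set V : Submodule ℂ (Polynomial ℂ) :=
    Submodule.span ℂ {y : Polynomial ℂ | IsPolyEigenfunction 1 q r y} with hV
  set M : Set ℕ := {m : ℕ | ∃ p ∈ V, p ≠ 0 ∧ p.rootMultiplicity ζ = m} with hM
  have hy : ∀ n, n ∉ F → (y n).natDegree = n ∧ y n ≠ 0 ∧ y n ∈ V := by
    intro n hn
    have h1 : y n = yF n hn := by rw [hy_def]; simp [hn]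
    refine ⟨by rw [h1]; exact hyFdeg n hn, by rw [h1]; exact (hyFeig n hn).1, ?_⟩
    rw [h1]
    exact Submodule.subset_span (hyFeig n hn)
  -- primitivity gives an element not vanishing at ζ
  rw [Primitive] at hprim
  push_neg at hprim
  obtain ⟨u, huE, hu0⟩ := hprim ζ
  have huV : u ∈ V := Submodule.subset_span huE
  have hune : u ≠ 0 := huE.1
  have hrm_u : u.rootMultiplicity ζ = 0 := rootMultiplicity_eq_zero hu0
  have h0M : (0 : ℕ) ∈ M := ⟨u, huV, hune, hrm_u⟩
  -- complement of M is finite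
  have hfin : {m : ℕ | m ∉ M}.Finite := by
    have h := count_lemma (V := V) (F := F) (y := y) hy ζ
    convert h using 2
    rfl
  -- r is at least as regular as q
  obtain ⟨Tu, hTuV, hTueq⟩ := T_closure q r huV
  have hrq : OrdGE ζ (min 0 (rord ζ q)) r := by
    rcases eq_or_ne r 0 with rfl | hr0
    · exact Or.inl rfl
    refine Or.inr ?_
    have hru : r * algebraMap (Polynomial ℂ) (RatFunc ℂ) u
        = algebraMap (Polynomial ℂ) (RatFunc ℂ) Tu
          + (- algebraMap (Polynomial ℂ) (RatFunc ℂ) (derivative (derivative u))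
            + - (q * algebraMap (Polynomial ℂ) (RatFunc ℂ) (derivative u))) := by
      linear_combination hTueq
    have hrord : rord ζ (r * algebraMap (Polynomial ℂ) (RatFunc ℂ) u) = rord ζ r := by
      rw [rord_mul hr0 (RatFunc.algebraMap_ne_zero hune), rord_algebraMap _ hune, hrm_u]
      ring
    have hOrd : OrdGE ζ (min 0 (rord ζ q)) (r * algebraMap (Polynomial ℂ) (RatFunc ℂ) u) := by
      rw [hru]
      refine OrdGE.add ((ordGE_algebraMap' _).mono (by omega)) (OrdGE.add
        (((ordGE_algebraMap' _).neg).mono (by omega)) ?_)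
      rcases eq_or_ne q 0 with rfl | hq0
      · exact Or.inl (by simp)
      · refine OrdGE.neg ?_
        have := OrdGE.mul (Or.inr (le_refl (rord ζ q)) : OrdGE ζ (rord ζ q) q)
          (ordGE_algebraMap' (ζ := ζ) (derivative u))
        exact this.mono (by omega)
    rcases hOrd with h0' | h0'
    · exact absurd h0' (mul_ne_zero hr0 (RatFunc.algebraMap_ne_zero hune))
    · rwa [hrord] at h0'
  -- q must have a pole at ζ
  have hnopole : ∀ f : RatFunc ℂ, OrdGE ζ 0 f → f.denom.eval ζ ≠ 0 := by
    intro f hf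
    rcases hf with rfl | hf
    · rw [RatFunc.denom_zero]
      simp
    · exact denom_eval_ne_zero_of_rord hf
  have hq_bad : ¬ OrdGE ζ 0 q := by
    intro hOq
    have hr' : OrdGE ζ 0 r := by
      refine hrq.mono ?_
      rcases hOq with rfl | hOq
      · rw [rord_zero]; omega
      · omega
    rcases hpole with h | h
    · exact hnopole q hOq h
    · exact hnopole r hr' h
  have hqne : q ≠ 0 := fun h => hq_bad (Or.inl h)
  have hdqneg : rord ζ q ≤ -1 := by
    by_contra h
    push_neg at h
    exact hq_bad (Or.inr (by omega))
  have hrq1 : OrdGE ζ (rord ζ q) r := hrq.mono (by omega)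
  -- rule out pole order ≥ 2 for q
  have hdq : rord ζ q = -1 := by
    by_contra hne
    have hdq2 : rord ζ q ≤ -2 := by omega
    have hstep : ∀ m : ℕ, m ∈ M → 1 ≤ m →
        ∃ m' : ℕ, m' ∈ M ∧ (m' : ℤ) = (m : ℤ) - 1 + rord ζ q := by
      intro m hm h1m
      obtain ⟨w, hwV, hwne, hwrm⟩ := hm
      obtain ⟨Tw, hTwV, hTweq⟩ := T_closure q r hwV
      have hs := shiftA hqne hdq2 hrq1 hwne (by omega) hTweq
      exact ⟨Tw.rootMultiplicity ζ, ⟨Tw, hTwV, hs.1, rfl⟩, by rw [hs.2, hwrm]⟩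
    set t : ℕ := (1 - rord ζ q).toNat with ht
    have ht3 : 3 ≤ t ∧ (t : ℤ) = 1 - rord ζ q := by omega
    have hdvd : ∀ m : ℕ, m ∈ M → t ∣ m := by
      intro m
      induction m using Nat.strong_induction_on with
      | _ m ih =>
        intro hm
        rcases Nat.eq_zero_or_pos m with rfl | hpos
        · exact dvd_zero t
        · obtain ⟨m', hm'M, hm'⟩ := hstep m hm hpos
          have hm'lt : m' < m := by omega
          have hdvd' := ih m' hm'lt hm'M
          have hmt : m = m' + t := by omega
          rw [hmt]
          exact Nat.dvd_add hdvd' (dvd_refl t)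
    -- two "consecutive" elements of M give a contradiction
    set Cf : Finset ℕ := hfin.toFinset with hCf
    set N : ℕ := Cf.sup id + 1 with hN
    have hbig : ∀ m, N ≤ m → m ∈ M := by
      intro m hm
      by_contra hmM
      have h' : m ∈ Cf := hfin.mem_toFinset.mpr hmM
      have := Finset.le_sup (f := id) h'
      simp only [id] at this
      omega
    have hd1 := hdvd N (hbig N le_rfl)
    have hd2 := hdvd (N+1) (hbig (N+1) (by omega))
    have hd3 : t ∣ 1 := by
      have h' := Nat.dvd_sub hd2 hd1
      simpa using h'
    have := Nat.le_of_dvd one_pos hd3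
    omega
  -- now q has a simple pole; define the residue
  set π : RatFunc ℂ := algebraMap (Polynomial ℂ) (RatFunc ℂ) (X - Polynomial.C ζ) with hπ
  set a : ℂ := RatFunc.eval (RingHom.id ℂ) ζ (π * q) with ha
  have hπne : π ≠ 0 := RatFunc.algebraMap_ne_zero (X_sub_C_ne_zero ζ)
  have hπord : rord ζ π = 1 := by
    rw [hπ, rord_algebraMap _ (X_sub_C_ne_zero ζ), rootMultiplicity_X_sub_C_self]
    norm_num
  have hπq_ord : rord ζ (π * q) = 0 := by
    rw [rord_mul hπne hqne, hπord, hdq]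
    ring
  have hπqne : π * q ≠ 0 := mul_ne_zero hπne hqne
  have hrq2 : OrdGE ζ (-1) r := by
    rw [← hdq]
    exact hrq1
  -- 1 is not an order
  have h1M : (1 : ℕ) ∉ M := by
    intro hm
    obtain ⟨w, hwV, hwne, hwrm⟩ := hm
    obtain ⟨Tw, hTwV, hTweq⟩ := T_closure q r hwV
    exact shiftB hqne hdq hrq2 hwne hwrm hTweq
  -- downshift by two
  have hdown : ∀ k : ℕ, (k+2) ∈ M → ((k:ℂ)+2) * (((k:ℂ)+1) + a) ≠ 0 → k ∈ M := by
    intro k hm hcoef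
    obtain ⟨w, hwV, hwne, hwrm⟩ := hm
    obtain ⟨Tw, hTwV, hTweq⟩ := T_closure q r hwV
    have hs := shiftC hqne hdq hrq2 hwne hwrm (by rw [← hπ, ← ha]; exact hcoef) hTweq
    exact ⟨Tw, hTwV, hs.1, hs.2⟩
  obtain ⟨ν, hν1, hνa, hνM⟩ := endgame M h0M h1M hfin a hdown
  refine ⟨ν, hν1, ?_, ⟨?_, ?_⟩, ?_⟩
  · exact hνM
  · exact denom_eval_ne_zero_of_rord (le_of_eq hπq_ord.symm)
  · exact hνa
  · rcases eq_or_ne r 0 with rfl | hr0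
    · rw [mul_zero, RatFunc.denom_zero]
      simp
    · have hrord : -1 ≤ rord ζ r := by
        rcases hrq2 with h' | h'
        · exact absurd h' hr0
        · exact h'
      have h0 : 0 ≤ rord ζ (algebraMap (Polynomial ℂ) (RatFunc ℂ) (X - Polynomial.C ζ) * r) := by
        rw [rord_mul (RatFunc.algebraMap_ne_zero (X_sub_C_ne_zero ζ)) hr0,
          rord_algebraMap _ (X_sub_C_ne_zero ζ), rootMultiplicity_X_sub_C_self]
        omega
      exact denom_eval_ne_zero_of_rord h0
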